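/- Sufficient condition for PM-simulability via maximal eigenvalues: let M = (M_1,...,M_n) be a POVM on ℂ^d and let λ_i^max be the largest eigenvalue of M_i. If for some index k, ∑_{i≠k} λ_i^max ≤ 1, then M is a convex combination of two-outcome POVMs (hence PM-simulable): M = δ(I,0,...,0) + ∑_{i≠k} λ_i^max N_i, where δ = 1 - ∑_{i≠k} λ_i^max and N_i is the two-outcome POVM with effect M_i/λ_i^max at outcome i and I - M_i/λ_i^max at outcome k. -/

import Mathlib

open scoped ComplexOrder

/-- An `n`-outcome POVM on `ℂ^d`. -/
def IsPOVM {d n : ℕ} (M : Fin n → Matrix (Fin d) (Fin d) ℂ) : Prop :=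
  (∀ i, (M i).PosSemidef) ∧ ∑ i, M i = 1

/-- A projective measurement: a POVM whose effects are orthogonal projections. -/
def IsProjectivePOVM {d n : ℕ} (M : Fin n → Matrix (Fin d) (Fin d) ℂ) : Prop :=
  IsPOVM M ∧ ∀ i, (M i).IsHermitian ∧ M i * M i = M i

/-- `n`-outcome POVMs with at most two nonzero effects (two-outcome POVMs). -/
def TwoOutcome (d n : ℕ) : Set (Fin n → Matrix (Fin d) (Fin d) ℂ) :=
  {N | IsPOVM N ∧ ∃ a b : Fin n, ∀ j, j ≠ a → j ≠ b → N j = 0}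

lemma diag_nn {d : ℕ} {A : Matrix (Fin d) (Fin d) ℂ} (hA : A.PosSemidef) (j : Fin d) :
    0 ≤ A j j := by
  have := hA.dotProduct_mulVec_nonneg (Pi.single j 1)
  simpa [Matrix.mulVec_single, dotProduct, Pi.single_apply, Finset.sum_ite_eq] using this

lemma smul_psd {d : ℕ} (c : ℝ) (hc : 0 ≤ c) {A : Matrix (Fin d) (Fin d) ℂ} (hA : A.PosSemidef) :
    ((c : ℂ) • A).PosSemidef := by
  refine Matrix.PosSemidef.of_dotProduct_mulVec_nonneg ?_ ?_
  · unfold Matrix.IsHermitian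
    rw [Matrix.conjTranspose_smul, hA.1.eq]
    congr 1
    simp [Complex.ext_iff]
  · intro x
    rw [Matrix.smul_mulVec, dotProduct_smul, smul_eq_mul]
    exact mul_nonneg (Complex.zero_le_real.mpr hc) (hA.dotProduct_mulVec_nonneg x)

lemma psd_neg_zero {d : ℕ} {A : Matrix (Fin d) (Fin d) ℂ} (h1 : A.PosSemidef)
    (h2 : (-A).PosSemidef) : A = 0 := by
  have hH := h1.1
  have hd : ∀ i, hH.eigenvalues i = 0 := by
    intro i
    refine le_antisymm ?_ (h1.eigenvalues_nonneg i)
    have hc := (h2.conjTranspose_mul_mul_same (hH.eigenvectorUnitary : Matrix (Fin d) (Fin d) ℂ))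
    rw [Matrix.mul_neg, Matrix.neg_mul, ← Matrix.star_eq_conjTranspose,
      ((Unitary.conjStarAlgAut_star_apply (S := ℂ) _ _).symm.trans
        hH.conjStarAlgAut_star_eigenvectorUnitary :
        star (hH.eigenvectorUnitary : Matrix (Fin d) (Fin d) ℂ) * A * hH.eigenvectorUnitary = _),
      Matrix.diagonal_neg] at hc
    have := Matrix.posSemidef_diagonal_iff.mp hc i
    simp only [Pi.neg_apply, Function.comp_apply, ← RCLike.ofReal_neg,
      RCLike.ofReal_nonneg] at this
    linarith
  have : Matrix.diagonal (RCLike.ofReal ∘ hH.eigenvalues) = (0 : Matrix (Fin d) (Fin d) ℂ) := by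
    ext i j
    by_cases h : i = j <;> simp [Matrix.diagonal_apply, h, hd]
  rw [hH.spectral_theorem, this, map_zero]

lemma bern_sum {R : Type*} [CommRing R] {d : ℕ} (t : Fin d → R) :
    ∑ σ : Fin d → Bool, (∏ l, if σ l then t l else 1 - t l) = 1 := by
  rw [← Fintype.prod_sum (fun l (b : Bool) => if b then t l else 1 - t l)]
  simp

lemma bern_key {R : Type*} [CommRing R] {d : ℕ} (t : Fin d → R) (i : Fin d) :
    ∑ σ : Fin d → Bool,
      (∏ l, if σ l then t l else 1 - t l) * (if σ i then 1 else 0) = t i := by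
  have h := Fintype.prod_sum
    (fun l (b : Bool) => if l = i then (if b then t l else 0) else (if b then t l else 1 - t l))
  have hL : (∏ l, ∑ b : Bool,
      (if l = i then (if b then t l else 0) else (if b then t l else 1 - t l))) = t i := by
    rw [Finset.prod_eq_single i (fun l _ hl => by simp [hl]) (by simp)]
    simp
  have hR : ∀ σ : Fin d → Bool,
      (∏ l, if l = i then (if σ l then t l else 0) else (if σ l then t l else 1 - t l))
      = (∏ l, if σ l then t l else 1 - t l) * (if σ i then 1 else 0) := by
    intro σ
    have e1 : ∀ l ∈ Finset.univ.erase i,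
        (if l = i then (if σ l then t l else 0) else (if σ l then t l else 1 - t l))
        = (if σ l then t l else 1 - t l) := fun l hl => by
      simp [Finset.ne_of_mem_erase hl]
    rw [← Finset.mul_prod_erase Finset.univ _ (Finset.mem_univ i),
        ← Finset.mul_prod_erase Finset.univ (fun l => if σ l then t l else 1 - t l)
          (Finset.mem_univ i), Finset.prod_congr rfl e1]
    by_cases h : σ i <;> simp [h] <;> ring
  rw [hL] at h
  rw [← Finset.sum_congr rfl (fun σ _ => hR σ), ← h]

lemma sum_two {n : ℕ} {α : Type*} [AddCommMonoid α] {a b : Fin n} (hab : a ≠ b) (X Y : α) :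
    ∑ j, (if j = a then X else if j = b then Y else 0) = X + Y := by
  have : ∀ j, (if j = a then X else if j = b then Y else 0)
      = (if j = a then X else 0) + (if j = b then Y else 0) := by
    intro j
    by_cases h1 : j = a
    · subst h1; simp [hab, Ne.symm hab]
    · by_cases h2 : j = b <;> simp [h1, h2, Ne.symm hab]
  rw [Finset.sum_congr rfl (fun j _ => this j), Finset.sum_add_distrib,
    Finset.sum_ite_eq' Finset.univ a (fun _ => X), Finset.sum_ite_eq' Finset.univ b (fun _ => Y)]
  simp

lemma mem_projHull {d n : ℕ} {a b : Fin n} (hab : a ≠ b)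
    (E : Matrix (Fin d) (Fin d) ℂ) (hE : E.PosSemidef)
    (hE1 : ((1 : Matrix (Fin d) (Fin d) ℂ) - E).PosSemidef) :
    (fun j => if j = a then E else if j = b then 1 - E else 0)
      ∈ convexHull ℝ {P : Fin n → Matrix (Fin d) (Fin d) ℂ | IsProjectivePOVM P} := by
  classical
  have hH := hE.1
  set U : Matrix (Fin d) (Fin d) ℂ := (hH.eigenvectorUnitary : Matrix (Fin d) (Fin d) ℂ) with hUdef
  have hU2 : star U * U = 1 := Matrix.mem_unitaryGroup_iff'.mp (hH.eigenvectorUnitary).2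
  have hU1 : U * star U = 1 := Matrix.mem_unitaryGroup_iff.mp (hH.eigenvectorUnitary).2
  have hcan : ∀ X : Matrix (Fin d) (Fin d) ℂ, star U * (U * X) = X := by
    intro X; rw [← mul_assoc, hU2, one_mul]
  set t : Fin d → ℝ := hH.eigenvalues with htdef
  have ht0 : ∀ j, 0 ≤ t j := hE.eigenvalues_nonneg
  have hdiag : star U * E * U = Matrix.diagonal (RCLike.ofReal ∘ t) :=
    (Unitary.conjStarAlgAut_star_apply (S := ℂ) _ _).symm.trans
      hH.conjStarAlgAut_star_eigenvectorUnitary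
  have ht1 : ∀ j, t j ≤ 1 := by
    intro j
    have hc := hE1.conjTranspose_mul_mul_same U
    have heq : U.conjTranspose * (1 - E) * U = Matrix.diagonal (fun j => 1 - (RCLike.ofReal (t j) : ℂ)) := by
      rw [← Matrix.star_eq_conjTranspose, Matrix.mul_sub, Matrix.mul_one, Matrix.sub_mul, hU2,
        hdiag, ← Matrix.diagonal_one, Matrix.diagonal_sub]
      rfl
    rw [heq] at hc
    have := Matrix.posSemidef_diagonal_iff.mp hc j
    rw [show (1 - (RCLike.ofReal (t j) : ℂ)) = RCLike.ofReal (1 - t j) by push_cast; ring,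
      RCLike.ofReal_nonneg] at this
    linarith
  set D : (Fin d → Bool) → Matrix (Fin d) (Fin d) ℂ :=
    fun σ => Matrix.diagonal (fun j => if σ j then (1 : ℂ) else 0) with hDdef
  set P : (Fin d → Bool) → Matrix (Fin d) (Fin d) ℂ := fun σ => U * D σ * star U with hPdef
  set w : (Fin d → Bool) → ℝ := fun σ => ∏ j, (if σ j then t j else 1 - t j) with hwdef
  have hw0 : ∀ σ, 0 ≤ w σ := fun σ => Finset.prod_nonneg (fun j _ => by
    by_cases h : σ j
    · simp [h, ht0 j]
    · simp [h]; linarith [ht1 j])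
  have hw1 : ∑ σ, w σ = 1 := bern_sum t
  have hDD : ∀ σ, D σ * D σ = D σ := by
    intro σ
    have hf : (fun j => (if σ j then (1:ℂ) else 0) * (if σ j then (1:ℂ) else 0))
        = fun j => if σ j then (1:ℂ) else 0 := by
      funext j; by_cases h : σ j <;> simp [h]
    show Matrix.diagonal _ * Matrix.diagonal _ = Matrix.diagonal _
    rw [Matrix.diagonal_mul_diagonal, hf]
  have hDH : ∀ σ, (D σ).conjTranspose = D σ := by
    intro σ
    have hf : (star fun j => (if σ j then (1:ℂ) else 0)) = fun j => if σ j then (1:ℂ) else 0 := by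
      funext j; by_cases h : σ j <;> simp [h]
    show (Matrix.diagonal _).conjTranspose = Matrix.diagonal _
    rw [Matrix.diagonal_conjTranspose, hf]
  have hPP : ∀ σ, P σ * P σ = P σ := by
    intro σ
    show (U * D σ * star U) * (U * D σ * star U) = U * D σ * star U
    simp only [mul_assoc]
    rw [hcan, ← mul_assoc (D σ), hDD]
  have hPH : ∀ σ, (P σ).IsHermitian := by
    intro σ
    show (U * D σ * star U).conjTranspose = U * D σ * star U
    rw [Matrix.conjTranspose_mul, Matrix.conjTranspose_mul, hDH,
      ← Matrix.star_eq_conjTranspose, ← Matrix.star_eq_conjTranspose, star_star]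
    rw [mul_assoc]
  have hPpsd : ∀ σ, (P σ).PosSemidef := by
    intro σ
    have hdpsd : (D σ).PosSemidef := Matrix.posSemidef_diagonal_iff.mpr (fun j => by
      by_cases h : σ j <;> simp [hDdef, h])
    have := hdpsd.mul_mul_conjTranspose_same U
    rwa [← Matrix.star_eq_conjTranspose] at this
  have hPc : ∀ σ, (1 : Matrix (Fin d) (Fin d) ℂ) - P σ
      = U * Matrix.diagonal (fun j => if σ j then (0:ℂ) else 1) * star U := by
    intro σ
    have h1 : (1 : Matrix (Fin d) (Fin d) ℂ) = U * Matrix.diagonal (fun _ => (1:ℂ)) * star U := by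
      rw [Matrix.diagonal_one, mul_one, hU1]
    have hsub : Matrix.diagonal (fun _ => (1:ℂ)) - D σ
        = Matrix.diagonal (fun j => if σ j then (0:ℂ) else 1) := by
      ext i j
      rcases eq_or_ne i j with rfl | hij
      · by_cases h : σ i <;> simp [Matrix.sub_apply, Matrix.diagonal_apply_eq, h, hDdef]
      · simp [Matrix.sub_apply, Matrix.diagonal_apply_ne _ hij, hDdef, Matrix.one_apply_ne hij]
    show (1 : Matrix (Fin d) (Fin d) ℂ) - U * D σ * star U = _
    conv_lhs => rw [h1]
    rw [← Matrix.sub_mul, ← Matrix.mul_sub, hsub]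
  have hPcpsd : ∀ σ, ((1 : Matrix (Fin d) (Fin d) ℂ) - P σ).PosSemidef := by
    intro σ
    rw [hPc σ]
    have hdpsd : (Matrix.diagonal (fun j => if σ j then (0:ℂ) else 1)).PosSemidef :=
      Matrix.posSemidef_diagonal_iff.mpr (fun j => by by_cases h : σ j <;> simp [h])
    have := hdpsd.mul_mul_conjTranspose_same U
    rwa [← Matrix.star_eq_conjTranspose] at this
  set Q : (Fin d → Bool) → (Fin n → Matrix (Fin d) (Fin d) ℂ) :=
    fun σ j => if j = a then P σ else if j = b then 1 - P σ else 0 with hQdef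
  have hQproj : ∀ σ, IsProjectivePOVM (Q σ) := by
    intro σ
    refine ⟨⟨fun j => ?_, ?_⟩, fun j => ?_⟩
    · by_cases h1 : j = a
      · simpa [hQdef, h1] using hPpsd σ
      · by_cases h2 : j = b
        · simpa [hQdef, h1, h2, Ne.symm hab] using hPcpsd σ
        · simpa [hQdef, h1, h2, Ne.symm hab] using (Matrix.PosSemidef.zero (n := Fin d) (R := ℂ))
    · rw [hQdef, sum_two hab]
      abel
    · constructor
      · by_cases h1 : j = a
        · simpa [hQdef, h1] using hPH σ
        · by_cases h2 : j = b
          · simpa [hQdef, h1, h2, Ne.symm hab] using (Matrix.isHermitian_one.sub (hPH σ))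
          · simp [hQdef, h1, h2, Ne.symm hab, Matrix.isHermitian_zero]
      · by_cases h1 : j = a
        · simpa [hQdef, h1] using hPP σ
        · by_cases h2 : j = b
          · simp only [hQdef, h1, h2, if_false, if_true, if_neg (Ne.symm hab)]
            rw [Matrix.mul_sub, Matrix.sub_mul, Matrix.sub_mul, hPP, mul_one, one_mul,
              Matrix.mul_one]
            abel
          · simp [hQdef, h1, h2, Ne.symm hab]
  have hsumD : ∑ σ : Fin d → Bool, (w σ : ℂ) • D σ = Matrix.diagonal (RCLike.ofReal ∘ t) := by
    ext i j
    rw [Matrix.sum_apply]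
    rcases eq_or_ne i j with rfl | hij
    · have hw : ∀ σ : Fin d → Bool,
          ((w σ : ℝ) : ℂ) = ∏ l, (if σ l then ((t l : ℝ) : ℂ) else 1 - ((t l : ℝ) : ℂ)) := by
        intro σ
        rw [hwdef]
        push_cast
        refine Finset.prod_congr rfl fun l _ => ?_
        by_cases h : σ l <;> simp [h]
      calc ∑ σ : Fin d → Bool, ((w σ : ℂ) • D σ) i i
          = ∑ σ : Fin d → Bool,
            (∏ l, (if σ l then ((t l : ℝ) : ℂ) else 1 - ((t l : ℝ) : ℂ)))
              * (if σ i then 1 else 0) := by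
            refine Finset.sum_congr rfl fun σ _ => ?_
            rw [← hw σ]
            simp [hDdef, Matrix.smul_apply, Matrix.diagonal_apply_eq, smul_eq_mul]
        _ = ((t i : ℝ) : ℂ) := bern_key (fun l => ((t l : ℝ) : ℂ)) i
        _ = Matrix.diagonal (RCLike.ofReal ∘ t) i i := by
            simp [Matrix.diagonal_apply_eq, Function.comp]
    · simp [Matrix.smul_apply, hDdef, Matrix.diagonal_apply_ne _ hij]
  have hsumP : ∑ σ : Fin d → Bool, w σ • P σ = E := by
    have h1 : ∀ σ : Fin d → Bool, w σ • P σ = U * ((w σ : ℂ) • D σ) * star U := by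
      intro σ
      rw [RCLike.real_smul_eq_coe_smul (K := ℂ)]
      show (w σ : ℂ) • (U * D σ * star U) = _
      rw [mul_smul_comm, smul_mul_assoc]
    rw [Finset.sum_congr rfl fun σ _ => h1 σ]
    calc ∑ σ : Fin d → Bool, U * ((w σ : ℂ) • D σ) * star U
        = U * (∑ σ : Fin d → Bool, (w σ : ℂ) • D σ) * star U := by
          rw [Finset.mul_sum, ← Finset.sum_mul]
      _ = E := by
          rw [hsumD]
          exact (Unitary.conjStarAlgAut_apply (S := ℂ) _ _).symm.trans hH.spectral_theorem.symm
  have htarget : (fun j => if j = a then E else if j = b then 1 - E else 0)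
      = ∑ σ : Fin d → Bool, w σ • Q σ := by
    funext j
    rw [Finset.sum_apply]
    by_cases h1 : j = a
    · subst h1
      simp only [hQdef, if_pos rfl, Pi.smul_apply, eq_self_iff_true, if_true]
      rw [← hsumP]
    · by_cases h2 : j = b
      · subst h2
        simp only [hQdef, Pi.smul_apply, if_neg h1, if_pos rfl, if_neg (Ne.symm hab), eq_self_iff_true, if_true]
        have : ∀ σ : Fin d → Bool,
            w σ • ((1 : Matrix (Fin d) (Fin d) ℂ) - P σ) = w σ • (1 : Matrix (Fin d) (Fin d) ℂ)
              - w σ • P σ := fun σ => smul_sub _ _ _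
        rw [Finset.sum_congr rfl fun σ _ => this σ, Finset.sum_sub_distrib,
          ← Finset.sum_smul, hw1, one_smul, hsumP]
      · simp [hQdef, h1, h2, Pi.smul_apply]
  rw [htarget]
  exact (convex_convexHull ℝ _).sum_mem (fun σ _ => hw0 σ) hw1
    (fun σ _ => subset_convexHull ℝ _ (hQproj σ))



/-- Sufficient condition for PM-simulability via maximal eigenvalues: if the sum
of the largest eigenvalues of all effects but one is at most `1`, then the POVM
is a convex combination of two-outcome POVMs, hence PM-simulable. -/
theorem maxEigenvalue_sum_simulable {d n : ℕ} (hd : 0 < d)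
    (M : Fin n → Matrix (Fin d) (Fin d) ℂ) (hM : IsPOVM M)
    (lam : Fin n → ℝ)
    (hub : ∀ i, (((lam i : ℝ) : ℂ) • (1 : Matrix (Fin d) (Fin d) ℂ) - M i).PosSemidef)
    (hmax : ∀ i (μ : ℝ),
      (((μ : ℝ) : ℂ) • (1 : Matrix (Fin d) (Fin d) ℂ) - M i).PosSemidef → lam i ≤ μ)
    (k : Fin n) (hsum : ∑ i ∈ Finset.univ \ {k}, lam i ≤ 1) :
    M ∈ convexHull ℝ (TwoOutcome d n) ∧
      M ∈ convexHull ℝ {P : Fin n → Matrix (Fin d) (Fin d) ℂ | IsProjectivePOVM P} := by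
  classical
  obtain ⟨hpsd, hsum1⟩ := hM
  have hlam0 : ∀ i, 0 ≤ lam i := by
    intro i
    set j : Fin d := ⟨0, hd⟩
    have h1 := diag_nn (hub i) j
    have h2 := diag_nn (hpsd i) j
    have he : (((lam i : ℝ) : ℂ) • (1 : Matrix (Fin d) (Fin d) ℂ) - M i) j j
        = ((lam i : ℝ) : ℂ) - M i j j := by
      simp [Matrix.sub_apply, Matrix.smul_apply, Matrix.one_apply_eq]
    rw [he] at h1
    have h3 := add_nonneg h1 h2
    rw [sub_add_cancel] at h3
    exact Complex.zero_le_real.mp h3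
  have hMzero : ∀ i, lam i = 0 → M i = 0 := by
    intro i h0
    refine psd_neg_zero (hpsd i) ?_
    have := hub i
    rw [h0] at this
    simpa using this
  set δ : ℝ := 1 - ∑ i ∈ Finset.univ \ {k}, lam i with hδ
  have hδ0 : 0 ≤ δ := by rw [hδ]; linarith
  set w : Fin n → ℝ := fun i => if i = k then δ else lam i with hw
  have hw0 : ∀ i, 0 ≤ w i := fun i => by
    by_cases h : i = k <;> simp [hw, h, hδ0, hlam0 i]
  have hw1 : ∑ i, w i = 1 := by
    rw [Finset.sum_eq_sum_sdiff_singleton_add (Finset.mem_univ k)]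
    have : ∀ i ∈ Finset.univ \ ({k} : Finset (Fin n)), w i = lam i := by
      intro i hi
      have : i ≠ k := by
        simpa [Finset.mem_sdiff] using hi
      simp [hw, this]
    rw [Finset.sum_congr rfl this]
    simp [hw, hδ]
  set T : Fin n → Matrix (Fin d) (Fin d) ℂ := fun j => if j = k then 1 else 0 with hT
  have hTproj : IsProjectivePOVM T := by
    refine ⟨⟨fun j => ?_, ?_⟩, fun j => ?_⟩
    · by_cases h : j = k
      · simpa [hT, h] using (Matrix.PosSemidef.one (n := Fin d) (R := ℂ))
      · simpa [hT, h] using (Matrix.PosSemidef.zero (n := Fin d) (R := ℂ))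
    · rw [hT, Finset.sum_ite_eq' Finset.univ k (fun _ => (1 : Matrix (Fin d) (Fin d) ℂ))]
      simp
    · by_cases h : j = k <;>
        simp [hT, h, Matrix.isHermitian_one, Matrix.isHermitian_zero]
  have hTtwo : T ∈ TwoOutcome d n := ⟨hTproj.1, k, k, fun j hj _ => by simp [hT, hj]⟩
  set N : Fin n → (Fin n → Matrix (Fin d) (Fin d) ℂ) := fun i =>
    if i = k ∨ lam i = 0 then T else
      fun j => if j = i then (((lam i)⁻¹ : ℝ) : ℂ) • M i
        else if j = k then 1 - (((lam i)⁻¹ : ℝ) : ℂ) • M i else 0 with hN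
  have hEpsd : ∀ i, ((((lam i)⁻¹ : ℝ) : ℂ) • M i).PosSemidef :=
    fun i => smul_psd _ (inv_nonneg.mpr (hlam0 i)) (hpsd i)
  have hEpsd1 : ∀ i, lam i ≠ 0 →
      ((1 : Matrix (Fin d) (Fin d) ℂ) - (((lam i)⁻¹ : ℝ) : ℂ) • M i).PosSemidef := by
    intro i h0
    have heq : (1 : Matrix (Fin d) (Fin d) ℂ) - (((lam i)⁻¹ : ℝ) : ℂ) • M i
        = (((lam i)⁻¹ : ℝ) : ℂ) • ((((lam i) : ℝ) : ℂ) • (1 : Matrix (Fin d) (Fin d) ℂ) - M i) := by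
      rw [smul_sub, smul_smul, ← Complex.ofReal_mul, inv_mul_cancel₀ h0]
      simp
    rw [heq]
    exact smul_psd _ (inv_nonneg.mpr (hlam0 i)) (hub i)
  have hNtwo : ∀ i, N i ∈ TwoOutcome d n := by
    intro i
    by_cases h : i = k ∨ lam i = 0
    · simpa [hN, h] using hTtwo
    · push_neg at h
      obtain ⟨hik, h0⟩ := h
      have hNi : N i = fun j => if j = i then (((lam i)⁻¹ : ℝ) : ℂ) • M i
          else if j = k then 1 - (((lam i)⁻¹ : ℝ) : ℂ) • M i else 0 := by
        simp [hN, hik, h0]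
      rw [hNi]
      refine ⟨⟨fun j => ?_, ?_⟩, i, k, fun j hj1 hj2 => by simp [hj1, hj2]⟩
      · by_cases h1 : j = i
        · simpa [h1] using hEpsd i
        · by_cases h2 : j = k
          · simpa [h1, h2, hik, Ne.symm hik] using hEpsd1 i h0
          · simpa [h1, h2] using (Matrix.PosSemidef.zero (n := Fin d) (R := ℂ))
      · beta_reduce
        rw [sum_two hik ((((lam i)⁻¹ : ℝ) : ℂ) • M i)
          (1 - (((lam i)⁻¹ : ℝ) : ℂ) • M i)]
        abel
  have hNproj : ∀ i, N i ∈ convexHull ℝ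
      {P : Fin n → Matrix (Fin d) (Fin d) ℂ | IsProjectivePOVM P} := by
    intro i
    by_cases h : i = k ∨ lam i = 0
    · have hmem : T ∈ {P : Fin n → Matrix (Fin d) (Fin d) ℂ | IsProjectivePOVM P} := hTproj
      simpa [hN, h] using subset_convexHull ℝ _ hmem
    · push_neg at h
      obtain ⟨hik, h0⟩ := h
      have hNi : N i = fun j => if j = i then (((lam i)⁻¹ : ℝ) : ℂ) • M i
          else if j = k then 1 - (((lam i)⁻¹ : ℝ) : ℂ) • M i else 0 := by
        simp [hN, hik, h0]
      rw [hNi]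
      exact mem_projHull hik _ (hEpsd i) (hEpsd1 i h0)
  have hdecomp : ∑ i, w i • N i = M := by
    funext j
    rw [Finset.sum_apply]
    simp only [Pi.smul_apply]
    have hterm : ∀ i, i ≠ k → w i • N i j
        = (if j = i then M i else if j = k then
            ((lam i : ℝ) : ℂ) • (1 : Matrix (Fin d) (Fin d) ℂ) - M i else 0) := by
      intro i hik
      by_cases h0 : lam i = 0
      · have hM0 := hMzero i h0
        have hNi : N i = T := by simp [hN, h0]
        rw [hNi]
        by_cases h1 : j = i
        · simp [hT, h1, hik, hM0, hw, h0]
        · by_cases h2 : j = k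
          · simp [hT, h1, h2, hM0, h0, hw, hik]
          · simp [hT, h1, h2, hw, hik]
      · have hNi : N i j = if j = i then (((lam i)⁻¹ : ℝ) : ℂ) • M i
            else if j = k then 1 - (((lam i)⁻¹ : ℝ) : ℂ) • M i else 0 := by
          simp [hN, hik, h0]
        rw [hNi]
        have hwi : w i = lam i := by simp [hw, hik]
        by_cases h1 : j = i
        · simp only [if_pos h1]
          rw [hwi, ← algebraMap_smul ℂ (lam i) ((((lam i)⁻¹ : ℝ) : ℂ) • M i),
            Complex.coe_algebraMap, smul_smul, ← Complex.ofReal_mul, mul_inv_cancel₀ h0]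
          simp
        · by_cases h2 : j = k
          · simp only [if_neg h1, if_pos h2]
            rw [hwi, ← algebraMap_smul ℂ (lam i)
                ((1 : Matrix (Fin d) (Fin d) ℂ) - (((lam i)⁻¹ : ℝ) : ℂ) • M i),
              Complex.coe_algebraMap, smul_sub, smul_smul, ← Complex.ofReal_mul,
              mul_inv_cancel₀ h0]
            simp
          · simp only [if_neg h1, if_neg h2, smul_zero]
    rw [Finset.sum_eq_sum_sdiff_singleton_add (Finset.mem_univ k)]
    have hNk : N k = T := by simp [hN]
    have hwk : w k = δ := by simp [hw]
    rw [hNk, hwk]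
    rw [Finset.sum_congr rfl (fun i hi => hterm i (by simpa [Finset.mem_sdiff] using hi))]
    have hMk : (∑ i ∈ Finset.univ \ ({k} : Finset (Fin n)), M i) + M k = 1 := by
      rw [← Finset.sum_eq_sum_sdiff_singleton_add (Finset.mem_univ k) M, hsum1]
    by_cases h2 : j = k
    · have hje : ∀ i ∈ Finset.univ \ ({k} : Finset (Fin n)),
          (if j = i then M i else if j = k then
            ((lam i : ℝ) : ℂ) • (1 : Matrix (Fin d) (Fin d) ℂ) - M i else 0)
            = ((lam i : ℝ) : ℂ) • (1 : Matrix (Fin d) (Fin d) ℂ) - M i := by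
        intro i hi
        have hik : i ≠ k := by simpa [Finset.mem_sdiff] using hi
        have hji : j ≠ i := by rw [h2]; exact Ne.symm hik
        rw [if_neg hji, if_pos h2]
      rw [Finset.sum_congr rfl hje, Finset.sum_sub_distrib]
      have hTk : T j = 1 := by simp [hT, h2]
      rw [hTk]
      have hs1 : ∑ i ∈ Finset.univ \ ({k} : Finset (Fin n)),
          ((lam i : ℝ) : ℂ) • (1 : Matrix (Fin d) (Fin d) ℂ)
          = (((∑ i ∈ Finset.univ \ ({k} : Finset (Fin n)), lam i : ℝ)) : ℂ)
            • (1 : Matrix (Fin d) (Fin d) ℂ) := by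
        rw [← Finset.sum_smul, Complex.ofReal_sum]
      have hs2 : δ • (1 : Matrix (Fin d) (Fin d) ℂ) = ((δ : ℝ) : ℂ) • 1 := by
        rw [← algebraMap_smul ℂ δ (1 : Matrix (Fin d) (Fin d) ℂ), Complex.coe_algebraMap]
      rw [hs1, hs2]
      have honei : (((∑ i ∈ Finset.univ \ ({k} : Finset (Fin n)), lam i : ℝ)) : ℂ)
            • (1 : Matrix (Fin d) (Fin d) ℂ) + ((δ : ℝ) : ℂ) • 1
          = (1 : Matrix (Fin d) (Fin d) ℂ) := by
        rw [← add_smul, ← Complex.ofReal_add, hδ]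
        norm_num
      calc (((∑ i ∈ Finset.univ \ ({k} : Finset (Fin n)), lam i : ℝ)) : ℂ)
            • (1 : Matrix (Fin d) (Fin d) ℂ)
            - (∑ i ∈ Finset.univ \ ({k} : Finset (Fin n)), M i) + ((δ : ℝ) : ℂ) • 1
          = ((((∑ i ∈ Finset.univ \ ({k} : Finset (Fin n)), lam i : ℝ)) : ℂ)
            • (1 : Matrix (Fin d) (Fin d) ℂ) + ((δ : ℝ) : ℂ) • 1)
            - (∑ i ∈ Finset.univ \ ({k} : Finset (Fin n)), M i) := by abel
        _ = 1 - (∑ i ∈ Finset.univ \ ({k} : Finset (Fin n)), M i) := by rw [honei]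
        _ = M j := by rw [h2, ← hMk]; abel
    · have hje : ∀ i ∈ Finset.univ \ ({k} : Finset (Fin n)),
          (if j = i then M i else if j = k then
            ((lam i : ℝ) : ℂ) • (1 : Matrix (Fin d) (Fin d) ℂ) - M i else 0)
            = (if j = i then M i else 0) := by
        intro i _
        by_cases h1 : j = i <;> simp [h1, h2]
      rw [Finset.sum_congr rfl hje, Finset.sum_ite_eq]
      have hjmem : j ∈ Finset.univ \ ({k} : Finset (Fin n)) := by
        simp [Finset.mem_sdiff, h2]
      rw [if_pos hjmem]
      have hTj : T j = 0 := by simp [hT, h2]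
      rw [hTj, smul_zero, add_zero]
  constructor
  · rw [← hdecomp]
    exact (convex_convexHull ℝ _).sum_mem (fun i _ => hw0 i) hw1
      (fun i _ => subset_convexHull ℝ _ (hNtwo i))
  · rw [← hdecomp]
    exact (convex_convexHull ℝ _).sum_mem (fun i _ => hw0 i) hw1
      (fun i _ => hNproj i)
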